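/- Let A and B be positive definite N×N matrices. Then the eigenvalues of the parallel sum satisfy the weak majorization λ(A:B) ≺_w λ(A) : λ(B), i.e., for every k ≤ N, the sum of the k largest eigenvalues of (A^{-1}+B^{-1})^{-1} is at most the sum over the k largest values of λ_i(A)λ_i(B)/(λ_i(A)+λ_i(B)), where eigenvalues are in decreasing order. -/

import Mathlib

open scoped ComplexOrder

/-- The eigenvalues of a Hermitian matrix, arranged in decreasing order
(junk value `0` if the matrix is not Hermitian). -/
noncomputable def eigDesc {N : ℕ} (A : Matrix (Fin N) (Fin N) ℂ) : Fin N → ℝ :=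
  if h : A.IsHermitian then fun i => (h.eigenvalues ∘ ⇑(Tuple.sort h.eigenvalues)) i.rev
  else 0

namespace EigAux

open Finset

/-! ### Sum re-indexing helpers -/

lemma sum_filter_lt_eq {N k : ℕ} (hk : k ≤ N) (f : Fin N → ℝ) (f' : ℕ → ℝ)
    (hag : ∀ (j : ℕ) (h : j < N), f' j = f ⟨j, h⟩) :
    ∑ i ∈ univ.filter (fun i : Fin N => (i : ℕ) < k), f i = ∑ j ∈ range k, f' j := by
  refine Finset.sum_bij (fun a _ => (a : ℕ)) ?_ ?_ ?_ ?_
  · intro a ha; simp only [mem_filter] at ha; exact mem_range.2 ha.2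
  · intro a ha b hb h; exact Fin.val_injective h
  · intro b hb
    exact ⟨⟨b, lt_of_lt_of_le (mem_range.1 hb) hk⟩, by simp [mem_range.1 hb], rfl⟩
  · intro a ha; exact (hag a a.2).symm

lemma sum_filter_rev_eq {N k : ℕ} (hk : k ≤ N) (f : Fin N → ℝ) (f' : ℕ → ℝ)
    (hag : ∀ (j : ℕ) (h : j < N), f' j = f ⟨j, h⟩) :
    ∑ i ∈ univ.filter (fun i : Fin N => (i : ℕ) < k), f i.rev
      = ∑ j ∈ Finset.Ico (N - k) N, f' j := by
  refine Finset.sum_bij (fun a _ => ((a : Fin N).rev : ℕ)) ?_ ?_ ?_ ?_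
  · intro a ha; simp only [mem_filter] at ha
    have h1 : (a : ℕ) < N := a.2
    simp only [Fin.val_rev, mem_Ico]
    omega
  · intro a ha b hb h
    exact Fin.rev_injective (Fin.val_injective h)
  · intro b hb
    simp only [mem_Ico] at hb
    refine ⟨(⟨b, hb.2⟩ : Fin N).rev, ?_, by simp⟩
    simp only [mem_filter, mem_univ, true_and, Fin.val_rev]
    omega
  · intro a ha; exact (hag _ _).symm

lemma card_filter_lt {N k : ℕ} (hk : k ≤ N) :
    (univ.filter (fun i : Fin N => (i : ℕ) < k)).card = k := by
  refine Eq.trans (Finset.card_bij (fun a _ => (a : ℕ)) ?_ ?_ ?_) (Finset.card_range k)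
  · intro a ha; simp only [mem_filter] at ha; exact mem_range.2 ha.2
  · intro a ha b hb h; exact Fin.val_injective h
  · intro b hb
    exact ⟨⟨b, lt_of_lt_of_le (mem_range.1 hb) hk⟩, by simp [mem_range.1 hb], rfl⟩

/-! ### Combinatorial rearrangement lemma -/

lemma comb_lemma {N k : ℕ} (hk : k ≤ N) (c w : Fin N → ℝ) (hc : Antitone c)
    (h0 : ∀ i, 0 ≤ w i) (h1 : ∀ i, w i ≤ 1) (hs : ∑ i, w i = k) :
    ∑ i, c i * w i ≤ ∑ i ∈ univ.filter (fun i : Fin N => (i : ℕ) < k), c i := by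
  rcases Nat.eq_zero_or_pos k with hk0 | hkpos
  · subst hk0
    have hw : ∀ i ∈ (univ : Finset (Fin N)), w i = 0 := by
      have := (Finset.sum_eq_zero_iff_of_nonneg (fun i _ => h0 i)).1 (by simpa using hs)
      simpa using this
    have : ∑ i, c i * w i = 0 :=
      Finset.sum_eq_zero (fun i hi => by rw [hw i hi, mul_zero])
    simp [this]
  · have hkN : k - 1 < N := by omega
    set θ := c ⟨k - 1, hkN⟩ with hθ
    have key : ∀ i : Fin N, c i * w i - (if (i : ℕ) < k then c i else 0)
        ≤ θ * w i - (if (i : ℕ) < k then θ else 0) := by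
      intro i
      by_cases h : (i : ℕ) < k
      · simp only [h, if_pos]
        have hci : θ ≤ c i := hc (by simp only [Fin.le_def]; omega)
        nlinarith [h1 i, h0 i]
      · simp only [h, if_neg, not_false_iff, sub_zero]
        have hci : c i ≤ θ := hc (by simp only [Fin.le_def]; omega)
        nlinarith [h0 i]
    have hsum := Finset.sum_le_sum (fun i (_ : i ∈ (univ : Finset (Fin N))) => key i)
    rw [Finset.sum_sub_distrib, Finset.sum_sub_distrib] at hsum
    have e1 : ∑ i : Fin N, (if (i : ℕ) < k then c i else 0)
        = ∑ i ∈ univ.filter (fun i : Fin N => (i : ℕ) < k), c i :=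
      (Finset.sum_filter _ _).symm
    have e2 : ∑ i : Fin N, (if (i : ℕ) < k then θ else 0)
        = ∑ i ∈ univ.filter (fun i : Fin N => (i : ℕ) < k), θ :=
      (Finset.sum_filter _ _).symm
    have e3 : ∑ i ∈ univ.filter (fun i : Fin N => (i : ℕ) < k), θ = k * θ := by
      simp [Finset.sum_const, card_filter_lt hk, nsmul_eq_mul]
    have e4 : ∑ i : Fin N, θ * w i = θ * (k : ℝ) := by
      rw [← Finset.mul_sum, hs]
    rw [e1, e2, e3, e4] at hsum
    linarith

/-! ### Abel summation and the convexity step -/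

lemma abel_tail {N : ℕ} (t d : ℕ → ℝ)
    (ht : ∀ i j, i ≤ j → j < N → t i ≤ t j)
    (hT : ∀ j, j ≤ N → 0 ≤ ∑ i ∈ Finset.Ico j N, d i) :
    ∀ n j, j + n = N → ∀ s : ℝ, 0 ≤ s → (∀ i, j ≤ i → i < N → s ≤ t i) →
      s * (∑ i ∈ Finset.Ico j N, d i) ≤ ∑ i ∈ Finset.Ico j N, t i * d i := by
  intro n
  induction n with
  | zero => intro j hj s hs hst; simp [show j = N by omega]
  | succ n ih =>
    intro j hj s hs hst
    have hjN : j < N := by omega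
    rw [Finset.sum_eq_sum_Ico_succ_bot hjN,
      Finset.sum_eq_sum_Ico_succ_bot hjN (f := fun i => t i * d i)]
    have h1 : t j * (∑ i ∈ Finset.Ico (j+1) N, d i) ≤ ∑ i ∈ Finset.Ico (j+1) N, t i * d i := by
      refine ih (j+1) (by omega) (t j) ?_ ?_
      · exact le_trans hs (hst j le_rfl hjN)
      · intro i hi hiN; exact ht j i (by omega) hiN
    have hTj1 : 0 ≤ ∑ i ∈ Finset.Ico (j+1) N, d i := hT (j+1) (by omega)
    have hTj : 0 ≤ d j + ∑ i ∈ Finset.Ico (j+1) N, d i := by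
      have := hT j (by omega)
      rwa [Finset.sum_eq_sum_Ico_succ_bot hjN] at this
    have hstj : s ≤ t j := hst j le_rfl hjN
    nlinarith

lemma step6 {N : ℕ} (m c : ℕ → ℝ)
    (hm : ∀ i < N, 0 < m i) (hcpos : ∀ i < N, 0 < c i)
    (hmono : ∀ i j, i ≤ j → j < N → m j ≤ m i)
    (hpartial : ∀ k, k ≤ N → ∑ i ∈ range k, m i ≤ ∑ i ∈ range k, c i)
    (htot : ∑ i ∈ range N, m i = ∑ i ∈ range N, c i) :
    ∀ k, k ≤ N → ∑ i ∈ Finset.Ico (N - k) N, (m i)⁻¹ ≤ ∑ i ∈ Finset.Ico (N - k) N, (c i)⁻¹ := by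
  intro k hk
  set d : ℕ → ℝ := fun i => m i - c i with hd
  set t : ℕ → ℝ := fun i => (m i)⁻¹ * (m i)⁻¹ with htdef
  have hT : ∀ j, j ≤ N → 0 ≤ ∑ i ∈ Finset.Ico j N, d i := by
    intro j hj
    have hIco : ∑ i ∈ Finset.Ico j N, d i
        = ∑ i ∈ range N, d i - ∑ i ∈ range j, d i := Finset.sum_Ico_eq_sub _ hj
    have h1 : ∑ i ∈ range N, d i = 0 := by
      simp only [hd, Finset.sum_sub_distrib]; linarith
    have h2 : ∑ i ∈ range j, d i ≤ 0 := by
      simp only [hd, Finset.sum_sub_distrib]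
      linarith [hpartial j hj]
    linarith [hIco]
  have ht : ∀ i j, i ≤ j → j < N → t i ≤ t j := by
    intro i j hij hjN
    have h1 : 0 < m j := hm j hjN
    have h2 : m j ≤ m i := hmono i j hij hjN
    have h4 : (m i)⁻¹ ≤ (m j)⁻¹ := inv_anti₀ h1 h2
    have h3 : 0 < (m i)⁻¹ := inv_pos.2 (lt_of_lt_of_le h1 h2)
    show (m i)⁻¹ * (m i)⁻¹ ≤ (m j)⁻¹ * (m j)⁻¹
    nlinarith
  have habel := abel_tail t d ht hT k (N - k) (by omega) 0 le_rfl
    (fun i _ hiN => show (0:ℝ) ≤ (m i)⁻¹ * (m i)⁻¹ from mul_self_nonneg _)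
  rw [zero_mul] at habel
  have hpt : ∀ i ∈ Finset.Ico (N - k) N, (m i)⁻¹ - (c i)⁻¹ ≤ -(t i * d i) := by
    intro i hi
    have hiN : i < N := (Finset.mem_Ico.1 hi).2
    have h1 : 0 < m i := hm i hiN
    have h2 : 0 < c i := hcpos i hiN
    have key : (m i)⁻¹ - (c i)⁻¹ ≤ (c i - m i) / (m i)^2 := by
      rw [inv_eq_one_div, inv_eq_one_div, div_sub_div _ _ (ne_of_gt h1) (ne_of_gt h2),
        div_le_div_iff₀ (by positivity) (by positivity)]
      nlinarith [sq_nonneg (c i - m i), h1.le]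
    have hrw : -(t i * d i) = (c i - m i) * ((m i)⁻¹ * (m i)⁻¹) := by
      simp only [htdef, hd]; ring
    rw [hrw]
    calc (m i)⁻¹ - (c i)⁻¹ ≤ (c i - m i) / (m i)^2 := key
    _ = (c i - m i) * ((m i)⁻¹ * (m i)⁻¹) := by rw [div_eq_mul_inv, sq]; ring
  have hfin := Finset.sum_le_sum hpt
  rw [Finset.sum_sub_distrib, Finset.sum_neg_distrib] at hfin
  linarith

/-! ### The Schur-type bound -/

lemma schur_bound {N : ℕ} (C W U : Matrix (Fin N) (Fin N) ℂ)
    (hW : W ∈ Matrix.unitaryGroup (Fin N) ℂ) (hU : U ∈ Matrix.unitaryGroup (Fin N) ℂ)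
    (c : Fin N → ℝ) (hC : C = W * Matrix.diagonal (Complex.ofReal ∘ c) * star W)
    (e : Equiv.Perm (Fin N)) (he : Antitone (c ∘ e))
    (T : Finset (Fin N)) (k : ℕ) (hT : T.card = k) (hk : k ≤ N) :
    ∑ j ∈ T, ((star U * C * U) j j).re
      ≤ ∑ i ∈ univ.filter (fun i : Fin N => (i : ℕ) < k), (c ∘ e) i := by
  have hW1 : star W * W = 1 := (Matrix.mem_unitaryGroup_iff').1 hW
  have hW2 : W * star W = 1 := (Matrix.mem_unitaryGroup_iff).1 hW
  have hU1 : star U * U = 1 := (Matrix.mem_unitaryGroup_iff').1 hU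
  have hU2 : U * star U = 1 := (Matrix.mem_unitaryGroup_iff).1 hU
  set P : Matrix (Fin N) (Fin N) ℂ := star W * U with hPdef
  have hsP : star P = star U * W := by
    rw [hPdef, star_mul, star_star]
  have hP1 : star P * P = 1 := by
    rw [hsP, hPdef]
    calc (star U * W) * (star W * U) = star U * (W * star W) * U := by
          simp only [Matrix.mul_assoc]
    _ = 1 := by rw [hW2, Matrix.mul_one, hU1]
  have hP2 : P * star P = 1 := by
    rw [hsP, hPdef]
    calc (star W * U) * (star U * W) = star W * (U * star U) * W := by
          simp only [Matrix.mul_assoc]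
    _ = 1 := by rw [hU2, Matrix.mul_one, hW1]
  have h1 : star U * C * U = star P * Matrix.diagonal (Complex.ofReal ∘ c) * P := by
    rw [hC, hsP, hPdef]
    simp only [Matrix.mul_assoc]
  have hentry : ∀ j, ((star U * C * U) j j).re
      = ∑ i, c i * Complex.normSq (P i j) := by
    intro j
    rw [h1, Matrix.mul_assoc, Matrix.mul_apply, Complex.re_sum]
    refine Finset.sum_congr rfl (fun i _ => ?_)
    rw [Matrix.diagonal_mul, Matrix.star_apply]
    have hterm : star (P i j) * ((Complex.ofReal ∘ c) i * P i j)
        = ((c i : ℂ)) * (P i j * star (P i j)) := by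
      simp only [Function.comp_apply]; ring
    rw [hterm, Complex.star_def, Complex.mul_conj]
    rw [← Complex.ofReal_mul, Complex.ofReal_re]
  have hrow : ∀ i, ∑ j, Complex.normSq (P i j) = 1 := by
    intro i
    have h := congrFun (congrFun hP2 i) i
    rw [Matrix.mul_apply, Matrix.one_apply_eq] at h
    have h' := congrArg Complex.re h
    rw [Complex.re_sum] at h'
    simp only [Matrix.star_apply, Complex.star_def, Complex.mul_conj, Complex.ofReal_re,
      Complex.one_re] at h'
    exact h'
  have hcol : ∀ j, ∑ i, Complex.normSq (P i j) = 1 := by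
    intro j
    have h := congrFun (congrFun hP1 j) j
    rw [Matrix.mul_apply, Matrix.one_apply_eq] at h
    have h' := congrArg Complex.re h
    rw [Complex.re_sum] at h'
    simp only [Matrix.star_apply, Complex.star_def] at h'
    have hterm : ∀ i, ((starRingEnd ℂ) (P i j) * P i j).re = Complex.normSq (P i j) := by
      intro i
      rw [mul_comm, Complex.mul_conj, Complex.ofReal_re]
    simp only [hterm, Complex.one_re] at h'
    exact h'
  set w : Fin N → ℝ := fun i => ∑ j ∈ T, Complex.normSq (P i j) with hwdef
  have hswap : ∑ j ∈ T, ((star U * C * U) j j).re = ∑ i, c i * w i := by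
    simp only [hentry, hwdef]
    rw [Finset.sum_comm]
    exact Finset.sum_congr rfl (fun i _ => by rw [Finset.mul_sum])
  have hw0 : ∀ i, 0 ≤ w i :=
    fun i => Finset.sum_nonneg (fun j _ => Complex.normSq_nonneg _)
  have hw1 : ∀ i, w i ≤ 1 := by
    intro i
    calc w i ≤ ∑ j, Complex.normSq (P i j) :=
          Finset.sum_le_sum_of_subset_of_nonneg (Finset.subset_univ T)
            (fun j _ _ => Complex.normSq_nonneg _)
    _ = 1 := hrow i
  have hwsum : ∑ i, w i = k := by
    simp only [hwdef]
    rw [Finset.sum_comm]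
    rw [Finset.sum_congr rfl (fun j (_ : j ∈ T) => hcol j)]
    simp [hT]
  rw [hswap]
  have hre : ∑ i, c i * w i = ∑ i, (c ∘ e) i * (w ∘ e) i :=
    (Equiv.sum_comp e (fun i => c i * w i)).symm
  rw [hre]
  refine comb_lemma hk (c ∘ e) (w ∘ e) he (fun i => hw0 _) (fun i => hw1 _) ?_
  rw [show ∑ i, (w ∘ ⇑e) i = ∑ i, w i from Equiv.sum_comp e w, hwsum]

/-! ### eigDesc basics -/

lemma eigDesc_spec {N : ℕ} {X : Matrix (Fin N) (Fin N) ℂ} (h : X.IsHermitian) (i : Fin N) :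
    eigDesc X i = h.eigenvalues (Tuple.sort h.eigenvalues i.rev) := by
  rw [eigDesc, dif_pos h]
  rfl

lemma eigDesc_antitone {N : ℕ} {X : Matrix (Fin N) (Fin N) ℂ} (h : X.IsHermitian) :
    Antitone (eigDesc X) := by
  intro i j hij
  rw [eigDesc_spec h, eigDesc_spec h]
  exact Tuple.monotone_sort h.eigenvalues (Fin.rev_le_rev.2 hij)

lemma eigDesc_pos {N : ℕ} {X : Matrix (Fin N) (Fin N) ℂ} (h : X.PosDef) (i : Fin N) :
    0 < eigDesc X i := by
  rw [eigDesc_spec h.1]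
  exact h.eigenvalues_pos _

/-! ### unitary conjugation helpers -/

lemma conj_mul_conj {N : ℕ} (U : Matrix (Fin N) (Fin N) ℂ) (hUU : star U * U = 1)
    (D1 D2 : Matrix (Fin N) (Fin N) ℂ) :
    (U * D1 * star U) * (U * D2 * star U) = U * (D1 * D2) * star U := by
  calc (U * D1 * star U) * (U * D2 * star U)
      = U * D1 * (star U * U) * (D2 * star U) := by simp only [Matrix.mul_assoc]
  _ = U * (D1 * D2) * star U := by rw [hUU, Matrix.mul_one]; simp only [Matrix.mul_assoc]

lemma trace_conj {N : ℕ} (U D : Matrix (Fin N) (Fin N) ℂ) (hUU : star U * U = 1) :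
    (U * D * star U).trace = D.trace := by
  rw [Matrix.trace_mul_comm, ← Matrix.mul_assoc, hUU, Matrix.one_mul]

/-- Spectral decomposition of the inverse of a positive definite matrix, using the
eigenvector unitary of the matrix itself. -/
lemma inv_decomp {N : ℕ} {X : Matrix (Fin N) (Fin N) ℂ} (hX : X.PosDef) :
    X⁻¹ = (hX.1.eigenvectorUnitary : Matrix (Fin N) (Fin N) ℂ)
        * Matrix.diagonal (Complex.ofReal ∘ (fun i => (hX.1.eigenvalues i)⁻¹))
        * star (hX.1.eigenvectorUnitary : Matrix (Fin N) (Fin N) ℂ) := by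
  have hUU : star (hX.1.eigenvectorUnitary : Matrix (Fin N) (Fin N) ℂ)
      * (hX.1.eigenvectorUnitary : Matrix (Fin N) (Fin N) ℂ) = 1 :=
    (Matrix.mem_unitaryGroup_iff').1 (hX.1.eigenvectorUnitary).2
  apply Matrix.inv_eq_right_inv
  have h2 : ((hX.1.eigenvectorUnitary : Matrix (Fin N) (Fin N) ℂ)
        * Matrix.diagonal (RCLike.ofReal ∘ hX.1.eigenvalues)
        * star (hX.1.eigenvectorUnitary : Matrix (Fin N) (Fin N) ℂ))
      * ((hX.1.eigenvectorUnitary : Matrix (Fin N) (Fin N) ℂ)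
        * Matrix.diagonal (Complex.ofReal ∘ (fun i => (hX.1.eigenvalues i)⁻¹))
        * star (hX.1.eigenvectorUnitary : Matrix (Fin N) (Fin N) ℂ)) = 1 := by
    rw [conj_mul_conj _ hUU, Matrix.diagonal_mul_diagonal]
    have hdiag : (fun i => (RCLike.ofReal ∘ hX.1.eigenvalues) i
        * (Complex.ofReal ∘ fun i => (hX.1.eigenvalues i)⁻¹) i) = fun _ => (1 : ℂ) := by
      funext i
      show (Complex.ofReal (hX.1.eigenvalues i)) * Complex.ofReal ((hX.1.eigenvalues i)⁻¹) = 1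
      exact_mod_cast mul_inv_cancel₀ (ne_of_gt (hX.eigenvalues_pos i))
    rw [hdiag, Matrix.diagonal_one, Matrix.mul_one]
    exact (Matrix.mem_unitaryGroup_iff).1 (hX.1.eigenvectorUnitary).2
  have hs := hX.1.spectral_theorem
  simp only [Unitary.conjStarAlgAut_apply, Unitary.coe_star] at hs
  rw [← hs] at h2
  exact h2


/-- conjugated diagonal entry -/
lemma conj_diag_entry_re {N : ℕ} {X : Matrix (Fin N) (Fin N) ℂ} (h : X.IsHermitian) (j : Fin N) :
    ((star (h.eigenvectorUnitary : Matrix (Fin N) (Fin N) ℂ) * X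
      * (h.eigenvectorUnitary : Matrix (Fin N) (Fin N) ℂ)) j j).re = h.eigenvalues j := by
  have hd := h.conjStarAlgAut_star_eigenvectorUnitary
  simp only [Unitary.conjStarAlgAut_star_apply, Unitary.coe_star] at hd
  rw [hd]
  rw [Matrix.diagonal_apply_eq]
  exact congrArg Complex.re (rfl : ((h.eigenvalues j : ℝ) : ℂ) = _) ▸ Complex.ofReal_re _

/-- trace as sum of eigenvalues -/
lemma trace_eq_sum_eig {N : ℕ} {X : Matrix (Fin N) (Fin N) ℂ} (h : X.IsHermitian) :
    X.trace = ∑ i, ((h.eigenvalues i : ℝ) : ℂ) := by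
  have h1 := congrArg Matrix.trace h.spectral_theorem
  simp only [Unitary.conjStarAlgAut_apply, Unitary.coe_star] at h1
  rw [trace_conj _ _ ((Matrix.mem_unitaryGroup_iff').1 (h.eigenvectorUnitary).2),
    Matrix.trace_diagonal] at h1
  exact h1

/-- trace of inverse as sum of inverse eigenvalues -/
lemma trace_inv_eq_sum_inv_eig {N : ℕ} {X : Matrix (Fin N) (Fin N) ℂ} (hX : X.PosDef) :
    (X⁻¹).trace = ∑ i, (((hX.1.eigenvalues i)⁻¹ : ℝ) : ℂ) := by
  have h1 := congrArg Matrix.trace (inv_decomp hX)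
  rw [trace_conj _ _ ((Matrix.mem_unitaryGroup_iff').1 (hX.1.eigenvectorUnitary).2),
    Matrix.trace_diagonal] at h1
  exact h1

/-- top-k representation -/
lemma topk_rep {N k : ℕ} (hk : k ≤ N) {M : Matrix (Fin N) (Fin N) ℂ} (hM : M.IsHermitian) :
    ∃ T : Finset (Fin N), T.card = k ∧
      ∑ i ∈ univ.filter (fun i : Fin N => (i : ℕ) < k), eigDesc M i
        = ∑ j ∈ T, ((star (hM.eigenvectorUnitary : Matrix (Fin N) (Fin N) ℂ) * M
            * (hM.eigenvectorUnitary : Matrix (Fin N) (Fin N) ℂ)) j j).re := by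
  classical
  have hinj : Function.Injective (fun i : Fin N => Tuple.sort hM.eigenvalues i.rev) :=
    (Equiv.injective _).comp Fin.rev_injective
  refine ⟨(univ.filter (fun i : Fin N => (i : ℕ) < k)).image
    (fun i => Tuple.sort hM.eigenvalues i.rev), ?_, ?_⟩
  · rw [Finset.card_image_of_injective _ hinj, card_filter_lt hk]
  · rw [Finset.sum_image (fun x _ y _ h => hinj h)]
    refine Finset.sum_congr rfl (fun i _ => ?_)
    rw [eigDesc_spec hM i, conj_diag_entry_re hM]

end EigAux

open Finset EigAux in
/-- For positive definite `A`, `B`, the eigenvalues of the parallel sum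
`A : B = (A⁻¹ + B⁻¹)⁻¹` are weakly majorized by the coordinatewise parallel sum of the
decreasing eigenvalue vectors: for every `k ≤ N`,
`∑_{i<k} λ_i(A:B) ≤ ∑_{i<k} λ_i(A) λ_i(B) / (λ_i(A) + λ_i(B))`. -/
theorem eig_parallel_sum_weak_majorization
    (N : ℕ) (A B : Matrix (Fin N) (Fin N) ℂ) (hA : A.PosDef) (hB : B.PosDef) :
    ∀ k : ℕ, k ≤ N →
      ∑ i ∈ Finset.univ.filter (fun i : Fin N => (i : ℕ) < k),
          eigDesc ((A⁻¹ + B⁻¹)⁻¹) i ≤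
      ∑ i ∈ Finset.univ.filter (fun i : Fin N => (i : ℕ) < k),
          eigDesc A i * eigDesc B i / (eigDesc A i + eigDesc B i) := by
  intro k hk
  classical
  have hAi : (A⁻¹).PosDef := hA.inv
  have hBi : (B⁻¹).PosDef := hB.inv
  set M : Matrix (Fin N) (Fin N) ℂ := A⁻¹ + B⁻¹ with hMdef
  have hM : M.PosDef := hAi.add hBi
  have hMi : (M⁻¹).PosDef := hM.inv
  set a : Fin N → ℝ := hA.1.eigenvalues with ha
  set b : Fin N → ℝ := hB.1.eigenvalues with hb
  set μ : Fin N → ℝ := hM.1.eigenvalues with hμ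
  -- antitone data for the inverse eigenvalue tuples
  have heA : Antitone ((fun i => (a i)⁻¹) ∘ (Tuple.sort a)) := by
    intro i j hij
    simp only [Function.comp_apply]
    exact inv_anti₀ (hA.eigenvalues_pos _) (Tuple.monotone_sort a hij)
  have heB : Antitone ((fun i => (b i)⁻¹) ∘ (Tuple.sort b)) := by
    intro i j hij
    simp only [Function.comp_apply]
    exact inv_anti₀ (hB.eigenvalues_pos _) (Tuple.monotone_sort b hij)
  have heM : Antitone ((fun i => (μ i)⁻¹) ∘ (Tuple.sort μ)) := by
    intro i j hij
    simp only [Function.comp_apply]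
    exact inv_anti₀ (hM.eigenvalues_pos _) (Tuple.monotone_sort μ hij)
  -- the Ky Fan step for M = A⁻¹ + B⁻¹
  have KFM : ∀ k', k' ≤ N →
      ∑ i ∈ univ.filter (fun i : Fin N => (i : ℕ) < k'), eigDesc M i
        ≤ ∑ i ∈ univ.filter (fun i : Fin N => (i : ℕ) < k'),
            ((eigDesc A i.rev)⁻¹ + (eigDesc B i.rev)⁻¹) := by
    intro k' hk'
    obtain ⟨T, hTcard, hTsum⟩ := topk_rep hk' hM.1
    set UM : Matrix (Fin N) (Fin N) ℂ := (hM.1.eigenvectorUnitary : Matrix (Fin N) (Fin N) ℂ)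
      with hUM
    have hUMmem : UM ∈ Matrix.unitaryGroup (Fin N) ℂ := (hM.1.eigenvectorUnitary).2
    have hsplit : ∑ j ∈ T, ((star UM * M * UM) j j).re
        = ∑ j ∈ T, ((star UM * A⁻¹ * UM) j j).re
          + ∑ j ∈ T, ((star UM * B⁻¹ * UM) j j).re := by
      rw [← Finset.sum_add_distrib]
      refine Finset.sum_congr rfl (fun j _ => ?_)
      have h : star UM * M * UM = star UM * A⁻¹ * UM + star UM * B⁻¹ * UM := by
        rw [hMdef, Matrix.mul_add, Matrix.add_mul]
      rw [h, Matrix.add_apply, Complex.add_re]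
    have hbA := schur_bound (A⁻¹) _ UM (hA.1.eigenvectorUnitary).2 hUMmem
      (fun i => (a i)⁻¹) (inv_decomp hA) (Tuple.sort a) heA T k' hTcard hk'
    have hbB := schur_bound (B⁻¹) _ UM (hB.1.eigenvectorUnitary).2 hUMmem
      (fun i => (b i)⁻¹) (inv_decomp hB) (Tuple.sort b) heB T k' hTcard hk'
    have hconvA : ∀ i : Fin N,
        ((fun i => (a i)⁻¹) ∘ (Tuple.sort a)) i = (eigDesc A i.rev)⁻¹ := by
      intro i
      rw [eigDesc_spec hA.1, Fin.rev_rev]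
      rfl
    have hconvB : ∀ i : Fin N,
        ((fun i => (b i)⁻¹) ∘ (Tuple.sort b)) i = (eigDesc B i.rev)⁻¹ := by
      intro i
      rw [eigDesc_spec hB.1, Fin.rev_rev]
      rfl
    rw [Finset.sum_congr rfl (fun i _ => hconvA i)] at hbA
    rw [Finset.sum_congr rfl (fun i _ => hconvB i)] at hbB
    rw [Finset.sum_add_distrib]
    rw [hTsum, hsplit]
    exact add_le_add hbA hbB
  -- the Ky Fan step for M⁻¹
  have KFI : ∑ i ∈ univ.filter (fun i : Fin N => (i : ℕ) < k), eigDesc (M⁻¹) i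
      ≤ ∑ i ∈ univ.filter (fun i : Fin N => (i : ℕ) < k), (eigDesc M i.rev)⁻¹ := by
    obtain ⟨T, hTcard, hTsum⟩ := topk_rep hk hMi.1
    have hb := schur_bound (M⁻¹) _ (hMi.1.eigenvectorUnitary : Matrix (Fin N) (Fin N) ℂ)
      (hM.1.eigenvectorUnitary).2 (hMi.1.eigenvectorUnitary).2
      (fun i => (μ i)⁻¹) (inv_decomp hM) (Tuple.sort μ) heM T k hTcard hk
    have hconvM : ∀ i : Fin N,
        ((fun i => (μ i)⁻¹) ∘ (Tuple.sort μ)) i = (eigDesc M i.rev)⁻¹ := by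
      intro i
      rw [eigDesc_spec hM.1, Fin.rev_rev]
      rfl
    rw [Finset.sum_congr rfl (fun i _ => hconvM i)] at hb
    rw [hTsum]
    exact hb
  -- trace identity
  have htr : ∑ i, eigDesc M i = ∑ i : Fin N, ((eigDesc A i.rev)⁻¹ + (eigDesc B i.rev)⁻¹) := by
    have h1 : ∑ i, eigDesc M i = ∑ i, μ i := by
      rw [← Equiv.sum_comp (Fin.revPerm.trans (Tuple.sort μ)) μ]
      exact Finset.sum_congr rfl (fun i _ => eigDesc_spec hM.1 i)
    have h2 : ∑ i : Fin N, ((eigDesc A i.rev)⁻¹ + (eigDesc B i.rev)⁻¹)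
        = ∑ i, (a i)⁻¹ + ∑ i, (b i)⁻¹ := by
      rw [Finset.sum_add_distrib]
      congr 1
      · rw [← Equiv.sum_comp (Tuple.sort a) (fun i => (a i)⁻¹)]
        refine Finset.sum_congr rfl (fun i _ => ?_)
        rw [eigDesc_spec hA.1, Fin.rev_rev]
      · rw [← Equiv.sum_comp (Tuple.sort b) (fun i => (b i)⁻¹)]
        refine Finset.sum_congr rfl (fun i _ => ?_)
        rw [eigDesc_spec hB.1, Fin.rev_rev]
    have h3 : M.trace = (A⁻¹).trace + (B⁻¹).trace := by
      rw [hMdef, Matrix.trace_add]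
    rw [trace_eq_sum_eig hM.1, trace_inv_eq_sum_inv_eig hA, trace_inv_eq_sum_inv_eig hB] at h3
    have h4 := congrArg Complex.re h3
    rw [Complex.add_re, Complex.re_sum, Complex.re_sum, Complex.re_sum] at h4
    simp only [Complex.ofReal_re] at h4
    rw [h1, h2]
    exact h4
  -- set up step6
  set m' : ℕ → ℝ := fun j => if h : j < N then eigDesc M ⟨j, h⟩ else 1 with hm'
  set c' : ℕ → ℝ := fun j =>
    if h : j < N then (eigDesc A (⟨j, h⟩ : Fin N).rev)⁻¹ + (eigDesc B (⟨j, h⟩ : Fin N).rev)⁻¹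
    else 1 with hc'
  have hm'ag : ∀ (j : ℕ) (h : j < N), m' j = eigDesc M ⟨j, h⟩ := fun j h => dif_pos h
  have hc'ag : ∀ (j : ℕ) (h : j < N),
      c' j = (eigDesc A (⟨j, h⟩ : Fin N).rev)⁻¹ + (eigDesc B (⟨j, h⟩ : Fin N).rev)⁻¹ :=
    fun j h => dif_pos h
  have hm'pos : ∀ i < N, 0 < m' i := by
    intro i hi; rw [hm'ag i hi]; exact eigDesc_pos hM _
  have hc'pos : ∀ i < N, 0 < c' i := by
    intro i hi; rw [hc'ag i hi]
    have h1 := eigDesc_pos hA ((⟨i, hi⟩ : Fin N).rev)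
    have h2 := eigDesc_pos hB ((⟨i, hi⟩ : Fin N).rev)
    positivity
  have hm'mono : ∀ i j, i ≤ j → j < N → m' j ≤ m' i := by
    intro i j hij hj
    have hi : i < N := lt_of_le_of_lt hij hj
    rw [hm'ag i hi, hm'ag j hj]
    exact eigDesc_antitone hM.1 (by exact hij)
  have hpartial : ∀ k', k' ≤ N → ∑ i ∈ range k', m' i ≤ ∑ i ∈ range k', c' i := by
    intro k' hk'
    rw [← sum_filter_lt_eq hk' (eigDesc M) m' hm'ag,
      ← sum_filter_lt_eq hk' (fun i : Fin N => (eigDesc A i.rev)⁻¹ + (eigDesc B i.rev)⁻¹) c' hc'ag]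
    exact KFM k' hk'
  have htot : ∑ i ∈ range N, m' i = ∑ i ∈ range N, c' i := by
    rw [← sum_filter_lt_eq le_rfl (eigDesc M) m' hm'ag,
      ← sum_filter_lt_eq le_rfl (fun i : Fin N => (eigDesc A i.rev)⁻¹ + (eigDesc B i.rev)⁻¹) c' hc'ag]
    rw [Finset.filter_true_of_mem (fun i _ => i.2)]
    exact htr
  have hstep := step6 m' c' hm'pos hc'pos hm'mono hpartial htot k hk
  -- bridge back
  have hbr1 : ∑ i ∈ univ.filter (fun i : Fin N => (i : ℕ) < k), (eigDesc M i.rev)⁻¹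
      = ∑ j ∈ Finset.Ico (N - k) N, (m' j)⁻¹ := by
    refine sum_filter_rev_eq hk (fun i : Fin N => (eigDesc M i)⁻¹) (fun j => (m' j)⁻¹) ?_
    intro j h
    show (m' j)⁻¹ = (eigDesc M ⟨j, h⟩)⁻¹
    rw [hm'ag j h]
  have hbr2 : ∑ i ∈ univ.filter (fun i : Fin N => (i : ℕ) < k),
        ((eigDesc A i.rev.rev)⁻¹ + (eigDesc B i.rev.rev)⁻¹)⁻¹
      = ∑ j ∈ Finset.Ico (N - k) N, (c' j)⁻¹ := by
    refine sum_filter_rev_eq hk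
      (fun i : Fin N => ((eigDesc A i.rev)⁻¹ + (eigDesc B i.rev)⁻¹)⁻¹) (fun j => (c' j)⁻¹) ?_
    intro j h
    show (c' j)⁻¹ = ((eigDesc A (⟨j, h⟩ : Fin N).rev)⁻¹ + (eigDesc B (⟨j, h⟩ : Fin N).rev)⁻¹)⁻¹
    rw [hc'ag j h]
  have hfinal : ∑ i ∈ univ.filter (fun i : Fin N => (i : ℕ) < k),
        ((eigDesc A i.rev.rev)⁻¹ + (eigDesc B i.rev.rev)⁻¹)⁻¹
      = ∑ i ∈ univ.filter (fun i : Fin N => (i : ℕ) < k),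
          eigDesc A i * eigDesc B i / (eigDesc A i + eigDesc B i) := by
    refine Finset.sum_congr rfl (fun i _ => ?_)
    rw [Fin.rev_rev]
    have h1 := eigDesc_pos hA i
    have h2 := eigDesc_pos hB i
    rw [inv_add_inv (ne_of_gt h1) (ne_of_gt h2), inv_div]
  calc ∑ i ∈ univ.filter (fun i : Fin N => (i : ℕ) < k), eigDesc (M⁻¹) i
      ≤ ∑ i ∈ univ.filter (fun i : Fin N => (i : ℕ) < k), (eigDesc M i.rev)⁻¹ := KFI
  _ = ∑ j ∈ Finset.Ico (N - k) N, (m' j)⁻¹ := hbr1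
  _ ≤ ∑ j ∈ Finset.Ico (N - k) N, (c' j)⁻¹ := hstep
  _ = ∑ i ∈ univ.filter (fun i : Fin N => (i : ℕ) < k),
        ((eigDesc A i.rev.rev)⁻¹ + (eigDesc B i.rev.rev)⁻¹)⁻¹ := hbr2.symm
  _ = ∑ i ∈ univ.filter (fun i : Fin N => (i : ℕ) < k),
        eigDesc A i * eigDesc B i / (eigDesc A i + eigDesc B i) := hfinal
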